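/- Expansivity of the annealed density function R: for all φ₁, φ₂ ≥ 0 one has |R(φ₁) − R(φ₂)| ≥ |φ₁ − φ₂|/(g*·b); consequently the inverse function Φ := R⁻¹ is Lipschitz continuous with Lipschitz constant g*·b on the range of R. -/

import Mathlib

set_option linter.unusedSectionVars false


open scoped BigOperators

/-- The "generalized factorial" `g(n)! = g(1)·g(2)···g(n)`, with `g(0)! = 1`. -/
noncomputable def gfact (g : ℕ → ℝ) (n : ℕ) : ℝ := ∏ i ∈ Finset.Icc 1 n, g i

/-- The partition function `Z(φ) = Σ_{n≥0} φⁿ/g(n)!`. -/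
noncomputable def Zfun (g : ℕ → ℝ) (φ : ℝ) : ℝ := ∑' n : ℕ, φ ^ n / gfact g n

/-- The one-site marginal `ν¹_φ(n) = φⁿ/(Z(φ)·g(n)!)`. -/
noncomputable def nu1 (g : ℕ → ℝ) (φ : ℝ) (n : ℕ) : ℝ := φ ^ n / (Zfun g φ * gfact g n)

/-- The mean density `M(φ) = Σ_{n≥0} n·ν¹_φ(n)`. -/
noncomputable def Mfun (g : ℕ → ℝ) (φ : ℝ) : ℝ := ∑' n : ℕ, (n : ℝ) * nu1 g φ n

open MeasureTheory

section aux
variable {g : ℕ → ℝ} {g₀ gstar : ℝ}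

lemma gfact_succ (g : ℕ → ℝ) (n : ℕ) : gfact g (n+1) = gfact g n * g (n+1) := by
  unfold gfact
  rw [Finset.prod_Icc_succ_top (by omega)]

lemma gfact_pos (hgpos : ∀ n, 1 ≤ n → 0 < g n) : ∀ n, 0 < gfact g n := by
  intro n
  induction n with
  | zero => simp [gfact]
  | succ k ih => rw [gfact_succ]; exact mul_pos ih (hgpos _ (by omega))

lemma gfact_ge (hg₀ : 0 < g₀) (hlin : ∀ n, g₀ * n ≤ g n) :
    ∀ n, g₀ ^ n * (n.factorial : ℝ) ≤ gfact g n := by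
  intro n
  induction n with
  | zero => simp [gfact]
  | succ k ih =>
    rw [gfact_succ, pow_succ, Nat.factorial_succ]
    push_cast
    calc g₀ ^ k * g₀ * ((k+1) * k.factorial : ℝ)
        = (g₀ ^ k * k.factorial) * (g₀ * (k+1)) := by ring
      _ ≤ gfact g k * g (k+1) := by
          apply mul_le_mul ih ?_ (by positivity) (le_of_lt (gfact_pos ?_ k))
          · exact_mod_cast hlin (k+1)
          · intro n hn
            calc (0:ℝ) < g₀ * n := by positivity -- wrong for n... n ≥ 1 so fine
            _ ≤ g n := hlin n

end aux

section aux2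
variable {g : ℕ → ℝ} {g₀ gstar : ℝ}
  (hg₀ : 0 < g₀) (hgpos : ∀ n, 1 ≤ n → 0 < g n) (hlin : ∀ n, g₀ * n ≤ g n)

include hg₀ hgpos hlin

lemma summable_n_pow (x : ℝ) : Summable (fun n : ℕ => (n:ℝ) * |x| ^ n / gfact g n) := by
  have hmaj : Summable (fun n : ℕ => (n:ℝ) * ((|x|/g₀) ^ n / n.factorial)) := by
    rw [← summable_nat_add_iff 1]
    have : (fun n : ℕ => ((n+1 : ℕ):ℝ) * ((|x|/g₀) ^ (n+1) / (n+1).factorial))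
        = fun n : ℕ => (|x|/g₀) * ((|x|/g₀) ^ n / n.factorial) := by
      funext n
      rw [Nat.factorial_succ, pow_succ]
      push_cast
      field_simp
    rw [this]
    exact (Real.summable_pow_div_factorial _).mul_left _
  apply Summable.of_nonneg_of_le ?_ ?_ hmaj
  · intro n
    have := gfact_pos hgpos n
    positivity
  · intro n
    have h1 : g₀ ^ n * (n.factorial : ℝ) ≤ gfact g n := gfact_ge hg₀ hlin n
    have hgf := gfact_pos hgpos n
    calc (n:ℝ) * |x| ^ n / gfact g n ≤ (n:ℝ) * |x| ^ n / (g₀ ^ n * n.factorial) := by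
          gcongr
      _ = (n:ℝ) * ((|x|/g₀) ^ n / n.factorial) := by rw [div_pow]; field_simp

lemma summable_pow' (x : ℝ) : Summable (fun n : ℕ => |x| ^ n / gfact g n) := by
  apply Summable.of_nonneg_of_le ?_ ?_ (Real.summable_pow_div_factorial (|x|/g₀))
  · intro n
    have := gfact_pos hgpos n
    positivity
  · intro n
    have h1 : g₀ ^ n * (n.factorial : ℝ) ≤ gfact g n := gfact_ge hg₀ hlin n
    have hgf := gfact_pos hgpos n
    calc |x| ^ n / gfact g n ≤ |x| ^ n / (g₀ ^ n * n.factorial) := by gcongr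
      _ = (|x|/g₀) ^ n / n.factorial := by rw [div_pow]; field_simp

lemma summable_pow (x : ℝ) : Summable (fun n : ℕ => x ^ n / gfact g n) := by
  refine Summable.of_abs (((summable_pow' hg₀ hgpos hlin x)).congr fun n => ?_)
  rw [abs_div, abs_pow, abs_of_pos (gfact_pos hgpos n)]

lemma summable_n_pow_signed (x : ℝ) : Summable (fun n : ℕ => (n:ℝ) * x ^ n / gfact g n) := by
  refine Summable.of_abs (((summable_n_pow hg₀ hgpos hlin x)).congr fun n => ?_)
  rw [abs_div, abs_mul, abs_pow, abs_of_pos (gfact_pos hgpos n), Nat.abs_cast]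

end aux2

section aux3
variable {g : ℕ → ℝ} {g₀ gstar : ℝ}
  (hg₀ : 0 < g₀) (hgpos : ∀ n, 1 ≤ n → 0 < g n) (hlin : ∀ n, g₀ * n ≤ g n)
  (hgzero : g 0 = 0)

include hg₀ hgpos hlin

lemma Zfun_ge_one {x : ℝ} (hx : 0 ≤ x) : 1 ≤ Zfun g x := by
  have h0 : (1:ℝ) = x ^ 0 / gfact g 0 := by simp [gfact]
  rw [h0]
  exact Summable.le_tsum (summable_pow hg₀ hgpos hlin x) 0
    (fun n _ => by have := gfact_pos hgpos n; positivity)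

lemma Zfun_pos {x : ℝ} (hx : 0 ≤ x) : 0 < Zfun g x :=
  lt_of_lt_of_le one_pos (Zfun_ge_one hg₀ hgpos hlin hx)

lemma summable_g (x : ℝ) : Summable (fun n : ℕ => g n * (x ^ n / gfact g n)) := by
  rw [← summable_nat_add_iff 1]
  have he : (fun n : ℕ => g (n+1) * (x ^ (n+1) / gfact g (n+1)))
      = fun n : ℕ => x * (x ^ n / gfact g n) := by
    funext n
    rw [gfact_succ, pow_succ]
    have h1 : g (n+1) ≠ 0 := (hgpos (n+1) (by omega)).ne'
    have h2 : gfact g n ≠ 0 := (gfact_pos hgpos n).ne'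
    field_simp
  rw [he]
  exact (summable_pow hg₀ hgpos hlin x).mul_left x

include hgzero in
lemma g_tsum_id (x : ℝ) :
    ∑' n : ℕ, g n * (x ^ n / gfact g n) = x * Zfun g x := by
  have hs : Summable (fun n : ℕ => g n * (x ^ n / gfact g n)) :=
    summable_g hg₀ hgpos hlin x
  rw [Summable.tsum_eq_zero_add hs]
  have hterm : ∀ n : ℕ, g (n+1) * (x ^ (n+1) / gfact g (n+1)) = x * (x ^ n / gfact g n) := by
    intro n
    rw [gfact_succ, pow_succ]
    have h1 : g (n+1) ≠ 0 := (hgpos (n+1) (by omega)).ne'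
    have h2 : gfact g n ≠ 0 := (gfact_pos hgpos n).ne'
    field_simp
  simp only [hterm, hgzero, pow_zero, zero_mul, zero_add]
  rw [tsum_mul_left]
  rfl

end aux3

section cheb

lemma cheb_finset (s : Finset ℕ) (A B C : ℕ → ℝ) (hA : ∀ n, 0 ≤ A n)
    (hB : Monotone B) (hC : Monotone C) :
    (∑ i ∈ s, A i * B i) * (∑ i ∈ s, A i * C i) ≤
      (∑ i ∈ s, A i) * (∑ i ∈ s, A i * (B i * C i)) := by
  have key : 0 ≤ ∑ i ∈ s, ∑ j ∈ s, A i * A j * ((B i - B j) * (C i - C j)) := by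
    refine Finset.sum_nonneg fun i _ => Finset.sum_nonneg fun j _ => ?_
    refine mul_nonneg (mul_nonneg (hA i) (hA j)) ?_
    rcases le_total i j with h|h
    · exact mul_nonneg_of_nonpos_of_nonpos (sub_nonpos.2 (hB h)) (sub_nonpos.2 (hC h))
    · exact mul_nonneg (sub_nonneg.2 (hB h)) (sub_nonneg.2 (hC h))
  have expand : (∑ i ∈ s, A i * (B i * C i)) * (∑ i ∈ s, A i)
      - (∑ i ∈ s, A i * B i) * (∑ i ∈ s, A i * C i)
      + ((∑ i ∈ s, A i) * (∑ i ∈ s, A i * (B i * C i))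
        - (∑ i ∈ s, A i * C i) * (∑ i ∈ s, A i * B i))
      = ∑ i ∈ s, ∑ j ∈ s, A i * A j * ((B i - B j) * (C i - C j)) := by
    rw [Finset.sum_mul_sum, Finset.sum_mul_sum, Finset.sum_mul_sum, Finset.sum_mul_sum]
    rw [← Finset.sum_sub_distrib, ← Finset.sum_sub_distrib, ← Finset.sum_add_distrib]
    refine Finset.sum_congr rfl fun i _ => ?_
    rw [← Finset.sum_sub_distrib, ← Finset.sum_sub_distrib, ← Finset.sum_add_distrib]
    refine Finset.sum_congr rfl fun j _ => ?_
    ring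
  nlinarith [key, expand]

lemma cheb_tsum (A B C : ℕ → ℝ) (hA : ∀ n, 0 ≤ A n) (hB : Monotone B) (hC : Monotone C)
    (h1 : Summable A) (h2 : Summable (fun n => A n * B n)) (h3 : Summable (fun n => A n * C n))
    (h4 : Summable (fun n => A n * (B n * C n))) :
    (∑' n, A n * B n) * (∑' n, A n * C n) ≤ (∑' n, A n) * (∑' n, A n * (B n * C n)) := by
  have t1 := h1.hasSum.tendsto_sum_nat
  have t2 := h2.hasSum.tendsto_sum_nat
  have t3 := h3.hasSum.tendsto_sum_nat
  have t4 := h4.hasSum.tendsto_sum_nat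
  exact le_of_tendsto_of_tendsto' (t2.mul t3) (t1.mul t4)
    (fun N => cheb_finset (Finset.range N) A B C hA hB hC)

end cheb

section aux4
variable {g : ℕ → ℝ} {g₀ gstar : ℝ}
  (hg₀ : 0 < g₀) (hgpos : ∀ n, 1 ≤ n → 0 < g n) (hlin : ∀ n, g₀ * n ≤ g n)
  (hgzero : g 0 = 0) (hgs : g₀ ≤ gstar) (hLip : ∀ n, |g (n + 1) - g n| ≤ gstar)

lemma Mfun_eq (x : ℝ) :
    Mfun g x = (∑' n : ℕ, (n:ℝ) * x ^ n / gfact g n) / Zfun g x := by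
  unfold Mfun nu1
  rw [← tsum_div_const]
  congr 1
  funext n
  rw [mul_comm (Zfun g x), ← div_div, mul_div_assoc, mul_div_assoc]

include hg₀ hgpos hlin hgs hLip hgzero

lemma hfun_mono : Monotone (fun n : ℕ => gstar * n - g n) := by
  apply monotone_nat_of_le_succ
  intro n
  have := hLip n
  have h2 := abs_le.1 this
  push_cast
  linarith [h2.2]

lemma hfun_nonneg (n : ℕ) : 0 ≤ gstar * n - g n := by
  have h0 : gstar * (0:ℕ) - g 0 = 0 := by simp [hgzero]
  have h1 := hfun_mono hg₀ hgpos hlin hgzero hgs hLip (Nat.zero_le n)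
  simp only [h0] at h1
  simpa [hgzero] using h1

lemma summable_h (x : ℝ) (hx : 0 ≤ x) :
    Summable (fun n : ℕ => (gstar * n - g n) * (x ^ n / gfact g n)) := by
  apply Summable.of_nonneg_of_le
  · intro n
    have := gfact_pos hgpos n
    exact mul_nonneg (hfun_nonneg hg₀ hgpos hlin hgzero hgs hLip n) (by positivity)
  · intro n
    show (gstar * n - g n) * (x ^ n / gfact g n) ≤ gstar * ((n:ℝ) * x ^ n / gfact g n)
    have hgf := gfact_pos hgpos n
    have h1 : gstar * n - g n ≤ gstar * n := by
      have h2 : 0 ≤ g n := by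
        rcases Nat.eq_zero_or_pos n with h|h
        · simp [h, hgzero]
        · exact (hgpos n h).le
      linarith
    calc (gstar * n - g n) * (x ^ n / gfact g n) ≤ gstar * n * (x ^ n / gfact g n) :=
          mul_le_mul_of_nonneg_right h1 (by positivity)
      _ = gstar * ((n:ℝ) * x ^ n / gfact g n) := by ring
  · exact ((summable_n_pow_signed hg₀ hgpos hlin x).mul_left gstar).congr (fun n => by ring)

lemma key_identity (x : ℝ) (hx : 0 ≤ x) :
    gstar * Mfun g x - x
      = (∑' n : ℕ, (gstar * n - g n) * (x ^ n / gfact g n)) / Zfun g x := by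
  have hZ : Zfun g x ≠ 0 := (Zfun_pos hg₀ hgpos hlin hx).ne'
  have hgid := g_tsum_id hg₀ hgpos hlin hgzero (g := g) x
  have hsub : (∑' n : ℕ, (gstar * n - g n) * (x ^ n / gfact g n))
      = gstar * (∑' n : ℕ, (n:ℝ) * x ^ n / gfact g n) - x * Zfun g x := by
    rw [← hgid, ← tsum_mul_left,
      ← Summable.tsum_sub (((summable_n_pow_signed hg₀ hgpos hlin x).mul_left gstar))
        (summable_g hg₀ hgpos hlin x)]
    congr 1
    funext n
    ring
  rw [hsub, Mfun_eq, sub_div, mul_div_assoc, mul_div_cancel_right₀ _ hZ]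

end aux4

section aux5
variable {g : ℕ → ℝ} {g₀ gstar : ℝ}
  (hg₀ : 0 < g₀) (hgpos : ∀ n, 1 ≤ n → 0 < g n) (hlin : ∀ n, g₀ * n ≤ g n)
  (hgzero : g 0 = 0) (hgs : g₀ ≤ gstar) (hLip : ∀ n, |g (n + 1) - g n| ≤ gstar)

include hg₀ hgpos hlin hgzero hgs hLip

lemma Efun_nonneg (x : ℝ) (hx : 0 ≤ x) :
    0 ≤ ∑' n : ℕ, (gstar * n - g n) * (x ^ n / gfact g n) := by
  apply tsum_nonneg
  intro n
  have := gfact_pos hgpos n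
  exact mul_nonneg (hfun_nonneg hg₀ hgpos hlin hgzero hgs hLip n) (by positivity)

lemma key_mono {y x : ℝ} (hy : 0 ≤ y) (hyx : y ≤ x) :
    gstar * Mfun g y - y ≤ gstar * Mfun g x - x := by
  have hx : 0 ≤ x := hy.trans hyx
  rw [key_identity hg₀ hgpos hlin hgzero hgs hLip y hy,
    key_identity hg₀ hgpos hlin hgzero hgs hLip x hx]
  rw [div_le_div_iff₀ (Zfun_pos hg₀ hgpos hlin hy) (Zfun_pos hg₀ hgpos hlin hx)]
  rcases eq_or_lt_of_le hy with h0|h0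
  · have hE0 : (∑' n : ℕ, (gstar * n - g n) * (y ^ n / gfact g n)) = 0 := by
      rw [← h0]
      have : ∀ n : ℕ, (gstar * n - g n) * ((0:ℝ) ^ n / gfact g n) = 0 := by
        intro n
        cases n with
        | zero => simp [hgzero]
        | succ k => simp [zero_pow]
      simp only [this, tsum_zero]
    rw [hE0, zero_mul]
    exact mul_nonneg (Efun_nonneg hg₀ hgpos hlin hgzero hgs hLip x hx)
      (Zfun_pos hg₀ hgpos hlin hy).le
  · -- y > 0 : Chebyshev with A n = y^n/gfact, B n = (x/y)^n, C n = hfun n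
    have hr : 1 ≤ x / y := (one_le_div h0).2 hyx
    have hAB : ∀ n : ℕ, (y ^ n / gfact g n) * (x/y) ^ n = x ^ n / gfact g n := by
      intro n
      have hyn : (y:ℝ) ^ n ≠ 0 := (pow_pos h0 n).ne'
      have hgf : gfact g n ≠ 0 := (gfact_pos hgpos n).ne'
      rw [div_pow]
      field_simp
    have hcheb := cheb_tsum (fun n => y ^ n / gfact g n) (fun n => (x/y) ^ n)
      (fun n => gstar * n - g n)
      (fun n => by have := gfact_pos hgpos n; positivity)
      (fun i j hij => pow_le_pow_right₀ hr hij)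
      (hfun_mono hg₀ hgpos hlin hgzero hgs hLip)
      (summable_pow hg₀ hgpos hlin y)
      (((summable_pow hg₀ hgpos hlin x)).congr (fun n => (hAB n).symm))
      (((summable_h hg₀ hgpos hlin hgzero hgs hLip y hy)).congr (fun n => by ring))
      (((summable_h hg₀ hgpos hlin hgzero hgs hLip x hx)).congr (fun n => by
        rw [← hAB n]; ring))
    have e1 : (∑' n : ℕ, (y ^ n / gfact g n) * (x/y) ^ n) = Zfun g x := by
      unfold Zfun; exact tsum_congr (fun n => hAB n)
    have e2 : (∑' n : ℕ, (y ^ n / gfact g n) * (gstar * n - g n))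
        = ∑' n : ℕ, (gstar * n - g n) * (y ^ n / gfact g n) := tsum_congr (fun n => by ring)
    have e3 : (∑' n : ℕ, (y ^ n / gfact g n) * ((x/y) ^ n * (gstar * n - g n)))
        = ∑' n : ℕ, (gstar * n - g n) * (x ^ n / gfact g n) :=
      tsum_congr (fun n => by rw [← hAB n]; ring)
    rw [e1, e2, e3] at hcheb
    show _ * Zfun g x ≤ _ * Zfun g y
    calc (∑' n : ℕ, (gstar * n - g n) * (y ^ n / gfact g n)) * Zfun g x
        = Zfun g x * (∑' n : ℕ, (gstar * n - g n) * (y ^ n / gfact g n)) := by ring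
      _ ≤ (∑' (n : ℕ), y ^ n / gfact g n) * (∑' n : ℕ, (gstar * n - g n) * (x ^ n / gfact g n)) := hcheb
      _ = (∑' n : ℕ, (gstar * n - g n) * (x ^ n / gfact g n)) * Zfun g y := by
          unfold Zfun; ring

lemma Mfun_nonneg (x : ℝ) (hx : 0 ≤ x) : 0 ≤ Mfun g x := by
  apply tsum_nonneg
  intro n
  have h1 := gfact_pos hgpos n
  have h2 := Zfun_pos hg₀ hgpos hlin hx
  unfold nu1
  positivity

lemma Mfun_le (x : ℝ) (hx : 0 ≤ x) : Mfun g x ≤ x / g₀ := by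
  have hZ := Zfun_pos hg₀ hgpos hlin hx
  rw [Mfun_eq, div_le_div_iff₀ hZ hg₀]
  have hS : g₀ * (∑' n : ℕ, (n:ℝ) * x ^ n / gfact g n) ≤ x * Zfun g x := by
    rw [← g_tsum_id hg₀ hgpos hlin hgzero, ← tsum_mul_left]
    apply Summable.tsum_le_tsum
    · intro n
      have h1 := gfact_pos hgpos n
      have h2 : g₀ * n ≤ g n := hlin n
      calc g₀ * ((n:ℝ) * x ^ n / gfact g n) = (g₀ * n) * (x ^ n / gfact g n) := by ring
        _ ≤ g n * (x ^ n / gfact g n) := by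
            apply mul_le_mul_of_nonneg_right h2 (by positivity)
    · exact ((summable_n_pow_signed hg₀ hgpos hlin x).mul_left g₀)
    · exact summable_g hg₀ hgpos hlin x
  linarith [hS]

lemma Mfun_expansive {y x : ℝ} (hy : 0 ≤ y) (hyx : y ≤ x) :
    (x - y) / gstar ≤ Mfun g x - Mfun g y := by
  have hgstar : 0 < gstar := lt_of_lt_of_le hg₀ hgs
  have := key_mono hg₀ hgpos hlin hgzero hgs hLip hy hyx
  rw [div_le_iff₀ hgstar]
  linarith

end aux5

open MeasureTheory

section aux6
variable {g : ℕ → ℝ} {g₀ gstar : ℝ}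
  (hg₀ : 0 < g₀) (hgpos : ∀ n, 1 ≤ n → 0 < g n) (hlin : ∀ n, g₀ * n ≤ g n)

include hg₀ hgpos hlin

lemma measurable_Zfun : Measurable (Zfun g) := by
  apply measurable_of_tendsto_metrizable
    (f := fun N : ℕ => fun x : ℝ => ∑ n ∈ Finset.range N, x ^ n / gfact g n)
  · intro N
    exact Finset.measurable_sum _ (fun n _ => (measurable_id.pow_const n).div_const _)
  · rw [tendsto_pi_nhds]
    intro x
    exact (summable_pow hg₀ hgpos hlin x).hasSum.tendsto_sum_nat

lemma measurable_Sfun : Measurable (fun x : ℝ => ∑' n : ℕ, (n:ℝ) * x ^ n / gfact g n) := by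
  apply measurable_of_tendsto_metrizable
    (f := fun N : ℕ => fun x : ℝ => ∑ n ∈ Finset.range N, (n:ℝ) * x ^ n / gfact g n)
  · intro N
    exact Finset.measurable_sum _ (fun n _ =>
      ((measurable_const.mul (measurable_id.pow_const n)).div_const _))
  · rw [tendsto_pi_nhds]
    intro x
    exact (summable_n_pow_signed hg₀ hgpos hlin x).hasSum.tendsto_sum_nat

lemma measurable_Mfun : Measurable (Mfun g) := by
  have : Mfun g = fun x => (∑' n : ℕ, (n:ℝ) * x ^ n / gfact g n) / Zfun g x := by
    funext x; exact Mfun_eq x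
  rw [this]
  exact (measurable_Sfun hg₀ hgpos hlin).div (measurable_Zfun hg₀ hgpos hlin)

end aux6



/-- Expansivity of the annealed density function `R(φ) := ∫ M(φ/p) dm(p)`:
for all `φ₁, φ₂ ≥ 0`, `|R(φ₁) − R(φ₂)| ≥ |φ₁ − φ₂|/(g*·b)`; consequently the inverse
function `Φ = R⁻¹` is Lipschitz with constant `g*·b` on the range of `R` over `[0,∞)`. -/
theorem annealed_density_expansive
    (g : ℕ → ℝ) (g₀ gstar : ℝ) (hg₀ : 0 < g₀) (hgs : g₀ ≤ gstar)
    (hgzero : g 0 = 0) (hgpos : ∀ n, 1 ≤ n → 0 < g n)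
    (hLip : ∀ n, |g (n + 1) - g n| ≤ gstar)
    (hlin : ∀ n, g₀ * n ≤ g n)
    (a b : ℝ) (ha : 0 < a) (hab : a < b)
    (m : Measure ℝ) [IsProbabilityMeasure m] (hm : ∀ᵐ p ∂m, p ∈ Set.Icc a b) :
    (∀ φ₁ φ₂ : ℝ, 0 ≤ φ₁ → 0 ≤ φ₂ →
        |φ₁ - φ₂| / (gstar * b) ≤
          |(∫ p, Mfun g (φ₁ / p) ∂m) - ∫ p, Mfun g (φ₂ / p) ∂m|) ∧
      (∀ ρ₁ ∈ (fun φ => ∫ p, Mfun g (φ / p) ∂m) '' Set.Ici (0 : ℝ),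
        ∀ ρ₂ ∈ (fun φ => ∫ p, Mfun g (φ / p) ∂m) '' Set.Ici (0 : ℝ),
        |Function.invFunOn (fun φ => ∫ p, Mfun g (φ / p) ∂m) (Set.Ici 0) ρ₁ -
            Function.invFunOn (fun φ => ∫ p, Mfun g (φ / p) ∂m) (Set.Ici 0) ρ₂| ≤
          gstar * b * |ρ₁ - ρ₂|) := by
  have hgstar : 0 < gstar := lt_of_lt_of_le hg₀ hgs
  have hb : 0 < b := ha.trans hab
  have hgb : 0 < gstar * b := mul_pos hgstar hb
  -- measurability of p ↦ Mfun g (φ/p)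
  have hmeas : ∀ φ : ℝ, Measurable (fun p : ℝ => Mfun g (φ / p)) := by
    intro φ
    exact (measurable_Mfun hg₀ hgpos hlin).comp (measurable_const.div measurable_id)
  -- integrability
  have hint : ∀ φ : ℝ, 0 ≤ φ → Integrable (fun p : ℝ => Mfun g (φ / p)) m := by
    intro φ hφ
    refine Integrable.mono' (integrable_const (φ / (a * g₀))) (hmeas φ).aestronglyMeasurable ?_
    filter_upwards [hm] with p hp
    have hp1 : 0 < p := lt_of_lt_of_le ha hp.1
    have hx : 0 ≤ φ / p := div_nonneg hφ hp1.le
    rw [Real.norm_eq_abs, abs_of_nonneg (Mfun_nonneg hg₀ hgpos hlin hgzero hgs hLip _ hx)]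
    calc Mfun g (φ / p) ≤ (φ / p) / g₀ := Mfun_le hg₀ hgpos hlin hgzero hgs hLip (φ/p) hx
      _ ≤ (φ / a) / g₀ := by gcongr; exact hp.1
      _ = φ / (a * g₀) := by rw [div_div]
  -- main monotone estimate
  have hmain : ∀ φ₁ φ₂ : ℝ, 0 ≤ φ₂ → φ₂ ≤ φ₁ →
      (∫ p, Mfun g (φ₂ / p) ∂m) + (φ₁ - φ₂) / (gstar * b) ≤ ∫ p, Mfun g (φ₁ / p) ∂m := by
    intro φ₁ φ₂ hφ₂ h12
    have hφ₁ : 0 ≤ φ₁ := hφ₂.trans h12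
    have hpt : ∀ᵐ p ∂m, Mfun g (φ₂ / p) + (φ₁ - φ₂) / (gstar * b) ≤ Mfun g (φ₁ / p) := by
      filter_upwards [hm] with p hp
      have hp1 : 0 < p := lt_of_lt_of_le ha hp.1
      have hx2 : 0 ≤ φ₂ / p := div_nonneg hφ₂ hp1.le
      have hx12 : φ₂ / p ≤ φ₁ / p := by gcongr
      have hexp := Mfun_expansive hg₀ hgpos hlin hgzero hgs hLip hx2 hx12
      have hcb : (φ₁ - φ₂) / (gstar * b) ≤ (φ₁ / p - φ₂ / p) / gstar := by
        rw [div_sub_div_same, div_div]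
        have h1 : p * gstar ≤ gstar * b := by nlinarith [hp.2]
        have h2 : (0:ℝ) ≤ φ₁ - φ₂ := by linarith
        gcongr
      linarith
    have h1 : ∫ p, (Mfun g (φ₂ / p) + (φ₁ - φ₂) / (gstar * b)) ∂m ≤ ∫ p, Mfun g (φ₁ / p) ∂m :=
      integral_mono_ae ((hint φ₂ hφ₂).add (integrable_const _)) (hint φ₁ hφ₁) hpt
    rwa [integral_add (hint φ₂ hφ₂) (integrable_const _), integral_const,
      probReal_univ, one_smul] at h1
  have part1 : ∀ φ₁ φ₂ : ℝ, 0 ≤ φ₁ → 0 ≤ φ₂ →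
      |φ₁ - φ₂| / (gstar * b) ≤
        |(∫ p, Mfun g (φ₁ / p) ∂m) - ∫ p, Mfun g (φ₂ / p) ∂m| := by
    intro φ₁ φ₂ hφ₁ hφ₂
    rcases le_total φ₂ φ₁ with h|h
    · have := hmain φ₁ φ₂ hφ₂ h
      rw [abs_of_nonneg (by linarith : (0:ℝ) ≤ φ₁ - φ₂)]
      calc (φ₁ - φ₂) / (gstar * b)
          ≤ (∫ p, Mfun g (φ₁ / p) ∂m) - ∫ p, Mfun g (φ₂ / p) ∂m := by linarith
        _ ≤ |(∫ p, Mfun g (φ₁ / p) ∂m) - ∫ p, Mfun g (φ₂ / p) ∂m| := le_abs_self _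
    · have := hmain φ₂ φ₁ hφ₁ h
      rw [abs_of_nonpos (by linarith : φ₁ - φ₂ ≤ (0:ℝ)), ← abs_neg]
      calc -(φ₁ - φ₂) / (gstar * b)
          ≤ (∫ p, Mfun g (φ₂ / p) ∂m) - ∫ p, Mfun g (φ₁ / p) ∂m := by
            rw [neg_sub]; linarith
        _ ≤ |(∫ p, Mfun g (φ₂ / p) ∂m) - ∫ p, Mfun g (φ₁ / p) ∂m| := le_abs_self _
        _ = |-((∫ p, Mfun g (φ₁ / p) ∂m) - ∫ p, Mfun g (φ₂ / p) ∂m)| := by rw [neg_sub]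
  refine ⟨part1, ?_⟩
  intro ρ₁ hρ₁ ρ₂ hρ₂
  set R : ℝ → ℝ := fun φ => ∫ p, Mfun g (φ / p) ∂m with hR
  have hex1 : ∃ φ ∈ Set.Ici (0:ℝ), R φ = ρ₁ := by
    obtain ⟨φ, hφ, hφe⟩ := hρ₁; exact ⟨φ, hφ, hφe⟩
  have hex2 : ∃ φ ∈ Set.Ici (0:ℝ), R φ = ρ₂ := by
    obtain ⟨φ, hφ, hφe⟩ := hρ₂; exact ⟨φ, hφ, hφe⟩
  set ψ₁ := Function.invFunOn R (Set.Ici 0) ρ₁ with hψ₁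
  set ψ₂ := Function.invFunOn R (Set.Ici 0) ρ₂ with hψ₂
  have hm1 : ψ₁ ∈ Set.Ici (0:ℝ) := Function.invFunOn_mem hex1
  have hm2 : ψ₂ ∈ Set.Ici (0:ℝ) := Function.invFunOn_mem hex2
  have he1 : R ψ₁ = ρ₁ := Function.invFunOn_eq hex1
  have he2 : R ψ₂ = ρ₂ := Function.invFunOn_eq hex2
  have he1' : (∫ p, Mfun g (ψ₁ / p) ∂m) = ρ₁ := he1
  have he2' : (∫ p, Mfun g (ψ₂ / p) ∂m) = ρ₂ := he2
  have := part1 ψ₁ ψ₂ hm1 hm2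
  rw [he1', he2'] at this
  rw [div_le_iff₀ hgb] at this
  calc |ψ₁ - ψ₂| ≤ |ρ₁ - ρ₂| * (gstar * b) := this
    _ = gstar * b * |ρ₁ - ρ₂| := mul_comm _ _
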